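/- Let u : Ω → [0,∞) be measurable on a finite-measure set Ω ⊂ ℝ^n and 1 < p < ∞. Then ‖u‖_{L¹(Ω)} ≤ (p/(p−1)) |||u|||_{M¹(Ω)} [1 + log( (‖u‖_{L^p(Ω)} / |||u|||_{M¹(Ω)}) ℒ^n(Ω)^{1−1/p} )]. -/

import Mathlib

open MeasureTheory Set

/-- logarithmic interpolation of `L¹` between weak-`L¹` and `L^p`, `1 < p < ∞`. -/
theorem interpolation_L1_weakL1_Lp (n : ℕ) (Ω : Set (EuclideanSpace ℝ (Fin n)))
    (hΩ : MeasurableSet Ω) (hfin : volume Ω < ⊤)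
    (u : EuclideanSpace ℝ (Fin n) → ℝ) (hu : Measurable u) (hnn : ∀ x ∈ Ω, 0 ≤ u x)
    (p : ℝ) (hp : 1 < p)
    (hLp : IntegrableOn (fun x => u x ^ p) Ω volume)
    (W : ℝ) (hWpos : 0 < W)
    (hW : IsLUB {y : ℝ | ∃ lam > (0 : ℝ),
      y = lam * (volume {x ∈ Ω | lam < u x}).toReal} W) :
    ∫ x in Ω, u x ≤ (p / (p - 1)) * W *
      (1 + Real.log ((∫ x in Ω, u x ^ p) ^ (1 / p) / W *
        (volume Ω).toReal ^ (1 - 1 / p))) := by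
  set μ := volume.restrict Ω with hμdef
  have hp0 : (0:ℝ) < p := by linarith
  have hp1 : (0:ℝ) < p - 1 := by linarith
  have hu_nn : 0 ≤ᵐ[μ] u := by
    filter_upwards [ae_restrict_mem hΩ] with x hx using hnn x hx
  have hupow_nn : 0 ≤ᵐ[μ] fun x => u x ^ p := by
    filter_upwards [ae_restrict_mem hΩ] with x hx using Real.rpow_nonneg (hnn x hx) p
  set I : ℝ := ∫ x in Ω, u x ^ p with hIdef
  have hI_nn : 0 ≤ I := integral_nonneg_of_ae hupow_nn
  -- measure rewriting
  have hmeas_eq : ∀ t : ℝ, μ {x | t < u x} = volume {x ∈ Ω | t < u x} := by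
    intro t
    rw [hμdef, Measure.restrict_apply (measurableSet_lt measurable_const hu)]
    congr 1
    ext x
    simp [and_comm]
  have hD_le : ∀ t : ℝ, μ {x | t < u x} ≤ volume Ω := by
    intro t
    calc μ {x | t < u x} ≤ μ univ := measure_mono (subset_univ _)
    _ = volume Ω := by rw [hμdef, Measure.restrict_apply_univ]
  have hD_lt_top : ∀ t : ℝ, μ {x | t < u x} < ⊤ := fun t => lt_of_le_of_lt (hD_le t) hfin
  -- weak-L1 bound
  have hWmem : ∀ t : ℝ, 0 < t → t * (μ {x | t < u x}).toReal ≤ W := by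
    intro t ht
    exact hW.1 ⟨t, ht, by rw [hmeas_eq]⟩
  -- volume positivity
  have hV0 : volume Ω ≠ 0 := by
    intro h0
    have hub : W ≤ 0 := by
      apply hW.2
      rintro y ⟨lam, hlam, rfl⟩
      have : volume {x ∈ Ω | lam < u x} = 0 :=
        measure_mono_null (fun x hx => hx.1) h0
      simp [this]
    linarith
  set Vr : ℝ := (volume Ω).toReal with hVrdef
  have hVr : 0 < Vr := ENNReal.toReal_pos hV0 hfin.ne
  have hVub : ∀ t : ℝ, (μ {x | t < u x}).toReal ≤ Vr :=
    fun t => ENNReal.toReal_mono hfin.ne (hD_le t)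
  -- Chebyshev
  have hCheb : ∀ t : ℝ, 0 < t → t ^ p * (μ {x | t < u x}).toReal ≤ I := by
    intro t ht
    have hsub : {x | t < u x} ⊆ {x | t ^ p ≤ u x ^ p} := by
      intro x hx
      exact Real.rpow_le_rpow ht.le (le_of_lt hx) hp0.le
    have h1 : t ^ p * (μ {x | t ^ p ≤ u x ^ p}).toReal ≤ I :=
      mul_meas_ge_le_integral_of_nonneg hupow_nn hLp (t ^ p)
    refine le_trans (mul_le_mul_of_nonneg_left ?_ (Real.rpow_nonneg ht.le p)) h1
    refine ENNReal.toReal_mono ?_ (measure_mono hsub)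
    exact (lt_of_le_of_lt (le_trans (measure_mono (subset_univ _)) (by rw [hμdef, Measure.restrict_apply_univ])) hfin).ne
  -- upper bound for W
  have hWB : W ≤ (I * Vr ^ (p - 1)) ^ (1 / p) := by
    apply hW.2
    rintro y ⟨t, ht, rfl⟩
    rw [← hmeas_eq]
    set d : ℝ := (μ {x | t < u x}).toReal with hd
    have hd0 : 0 ≤ d := ENNReal.toReal_nonneg
    rcases eq_or_lt_of_le hd0 with hdz | hdp
    · rw [← hdz, mul_zero]
      positivity
    · have hyp : (t * d) ^ p ≤ I * Vr ^ (p - 1) := by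
        have h1 : t ^ p ≤ I / d := (le_div_iff₀ hdp).2 (hCheb t ht)
        have h2 : (t * d) ^ p = t ^ p * d ^ p :=
          Real.mul_rpow ht.le hd0
        have h3 : d ^ p = d ^ (p - 1) * d := by
          have := Real.rpow_add hdp (p - 1) 1
          simp only [sub_add_cancel, Real.rpow_one] at this
          exact this
        calc (t * d) ^ p = t ^ p * (d ^ (p - 1) * d) := by rw [h2, h3]
        _ ≤ (I / d) * (d ^ (p - 1) * d) := by
            refine mul_le_mul_of_nonneg_right h1 ?_
            positivity
        _ = I * d ^ (p - 1) := by field_simp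
        _ ≤ I * Vr ^ (p - 1) :=
            mul_le_mul_of_nonneg_left (Real.rpow_le_rpow hd0 (hVub t) hp1.le) hI_nn
      calc t * d = ((t * d) ^ p) ^ (1 / p) := by
            rw [one_div, Real.rpow_rpow_inv (by positivity) hp0.ne']
      _ ≤ (I * Vr ^ (p - 1)) ^ (1 / p) :=
            Real.rpow_le_rpow (by positivity) hyp (by positivity)
  have hIpos : 0 < I := by
    rcases eq_or_lt_of_le hI_nn with h | h
    · exfalso
      rw [← h] at hWB
      simp only [zero_mul] at hWB
      rw [Real.zero_rpow (by positivity : (1:ℝ)/p ≠ 0)] at hWB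
      linarith
    · exact h
  -- split points
  set a : ℝ := W / Vr with hadef
  set b : ℝ := (I / W) ^ (1 / (p - 1)) with hbdef
  have hapos : 0 < a := by positivity
  have hbpos : 0 < b := by positivity
  have hab : a ≤ b := by
    have hWp : W ^ p ≤ I * Vr ^ (p - 1) := by
      have := Real.rpow_le_rpow hWpos.le hWB hp0.le
      rwa [one_div, Real.rpow_inv_rpow (by positivity) hp0.ne'] at this
    have hkey : a ^ (p - 1) ≤ I / W := by
      rw [hadef, Real.div_rpow hWpos.le hVr.le, div_le_div_iff₀ (by positivity) hWpos]
      calc W ^ (p - 1) * W = W ^ p := by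
            have := Real.rpow_add hWpos (p - 1) 1
            simp only [sub_add_cancel, Real.rpow_one] at this
            exact this.symm
      _ ≤ I * Vr ^ (p - 1) := hWp
    calc a = (a ^ (p - 1)) ^ (1 / (p - 1)) := by
          rw [one_div, Real.rpow_rpow_inv hapos.le hp1.ne']
    _ ≤ (I / W) ^ (1 / (p - 1)) :=
          Real.rpow_le_rpow (by positivity) hkey (by positivity)
  -- layer cake
  have layer : ∫⁻ x, ENNReal.ofReal (u x) ∂μ = ∫⁻ t in Ioi (0:ℝ), μ {x | t < u x} :=
    lintegral_eq_lintegral_meas_lt μ hu_nn hu.aemeasurable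
  have hsplit : ∫⁻ t in Ioi (0:ℝ), μ {x | t < u x} =
      (∫⁻ t in Ioc (0:ℝ) a, μ {x | t < u x}) + (∫⁻ t in Ioc a b, μ {x | t < u x})
        + ∫⁻ t in Ioi b, μ {x | t < u x} := by
    rw [← Ioc_union_Ioi_eq_Ioi (le_trans hapos.le hab),
      lintegral_union measurableSet_Ioi (Ioc_disjoint_Ioi le_rfl),
      ← Ioc_union_Ioc_eq_Ioc hapos.le hab,
      lintegral_union measurableSet_Ioc (Ioc_disjoint_Ioc.2 (inf_le_left.trans le_sup_right))]
  have bound1 : ∫⁻ t in Ioc (0:ℝ) a, μ {x | t < u x} ≤ ENNReal.ofReal W := by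
    calc ∫⁻ t in Ioc (0:ℝ) a, μ {x | t < u x} ≤ ∫⁻ _ in Ioc (0:ℝ) a, volume Ω :=
        lintegral_mono fun t => hD_le t
    _ = volume Ω * ENNReal.ofReal a := by
        rw [setLIntegral_const, Real.volume_Ioc, sub_zero]
    _ = ENNReal.ofReal (Vr * a) := by
        rw [ENNReal.ofReal_mul hVr.le, ENNReal.ofReal_toReal hfin.ne]
    _ = ENNReal.ofReal W := by
        congr 1
        rw [hadef]
        field_simp
  have bound2 : ∫⁻ t in Ioc a b, μ {x | t < u x} ≤
      ENNReal.ofReal (W * Real.log (b / a)) := by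
    have hint : IntegrableOn (fun t : ℝ => W / t) (Ioc a b) := by
      refine IntegrableOn.mono_set ?_ Ioc_subset_Icc_self
      exact (continuousOn_const.div continuousOn_id
        (fun x hx => ne_of_gt (lt_of_lt_of_le hapos hx.1))).integrableOn_compact isCompact_Icc
    have hnn2 : 0 ≤ᵐ[volume.restrict (Ioc a b)] fun t : ℝ => W / t := by
      filter_upwards [ae_restrict_mem measurableSet_Ioc] with t ht
      exact div_nonneg hWpos.le (le_of_lt (lt_trans hapos ht.1))
    have hpt2 : ∫⁻ t in Ioc a b, μ {x | t < u x} ≤ ∫⁻ t in Ioc a b, ENNReal.ofReal (W / t) := by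
      refine setLIntegral_mono ((measurable_const.div measurable_id).ennreal_ofReal) ?_
      intro t ht
      have ht0 : 0 < t := lt_trans hapos ht.1
      have h1 : (μ {x | t < u x}).toReal ≤ W / t :=
        (le_div_iff₀ ht0).2 (by rw [mul_comm]; exact hWmem t ht0)
      calc μ {x | t < u x} = ENNReal.ofReal ((μ {x | t < u x}).toReal) :=
          (ENNReal.ofReal_toReal (hD_lt_top t).ne).symm
      _ ≤ ENNReal.ofReal (W / t) := ENNReal.ofReal_le_ofReal h1
    calc ∫⁻ t in Ioc a b, μ {x | t < u x} ≤ ∫⁻ t in Ioc a b, ENNReal.ofReal (W / t) := hpt2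
    _ = ENNReal.ofReal (∫ t in Ioc a b, W / t) :=
        (ofReal_integral_eq_lintegral_ofReal hint hnn2).symm
    _ = ENNReal.ofReal (W * Real.log (b / a)) := by
        congr 1
        rw [← intervalIntegral.integral_of_le hab]
        have h0 : (0:ℝ) ∉ uIcc a b := by
          rw [uIcc_of_le hab]
          intro h
          exact absurd h.1 (not_le.2 hapos)
        calc ∫ t in a..b, W / t = W * ∫ t in a..b, 1 / t := by
              rw [← intervalIntegral.integral_const_mul]
              simp only [mul_one_div]
        _ = W * Real.log (b / a) := by rw [integral_one_div h0]
  have hb1p : b ^ (1 - p) = W / I := by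
    rw [hbdef, ← Real.rpow_mul (by positivity)]
    rw [show (1 / (p - 1) * (1 - p)) = -1 by field_simp; ring]
    rw [Real.rpow_neg_one, inv_div]
  have bound3 : ∫⁻ t in Ioi b, μ {x | t < u x} ≤ ENNReal.ofReal (W / (p - 1)) := by
    have hint : IntegrableOn (fun t : ℝ => I * t ^ (-p)) (Ioi b) :=
      (integrableOn_Ioi_rpow_of_lt (by linarith) hbpos).const_mul I
    have hnn3 : 0 ≤ᵐ[volume.restrict (Ioi b)] fun t : ℝ => I * t ^ (-p) := by
      filter_upwards [ae_restrict_mem measurableSet_Ioi] with t ht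
      exact mul_nonneg hI_nn (Real.rpow_nonneg (le_of_lt (lt_trans hbpos ht)) _)
    have hpt3 : ∫⁻ t in Ioi b, μ {x | t < u x} ≤ ∫⁻ t in Ioi b, ENNReal.ofReal (I * t ^ (-p)) := by
      refine setLIntegral_mono (by fun_prop) ?_
      intro t ht
      have ht0 : 0 < t := lt_trans hbpos ht
      have h1 : (μ {x | t < u x}).toReal ≤ I * t ^ (-p) := by
        rw [Real.rpow_neg ht0.le, ← div_eq_mul_inv]
        exact (le_div_iff₀ (by positivity)).2 (by rw [mul_comm]; exact hCheb t ht0)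
      calc μ {x | t < u x} = ENNReal.ofReal ((μ {x | t < u x}).toReal) :=
          (ENNReal.ofReal_toReal (hD_lt_top t).ne).symm
      _ ≤ ENNReal.ofReal (I * t ^ (-p)) := ENNReal.ofReal_le_ofReal h1
    calc ∫⁻ t in Ioi b, μ {x | t < u x} ≤ ∫⁻ t in Ioi b, ENNReal.ofReal (I * t ^ (-p)) := hpt3
    _ = ENNReal.ofReal (∫ t in Ioi b, I * t ^ (-p)) :=
        (ofReal_integral_eq_lintegral_ofReal hint hnn3).symm
    _ = ENNReal.ofReal (W / (p - 1)) := by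
        congr 1
        rw [MeasureTheory.integral_const_mul, integral_Ioi_rpow_of_lt (by linarith) hbpos]
        rw [show (-p + 1) = (1 - p) by ring, hb1p]
        rw [show (1 - p) = -(p - 1) by ring]
        rw [div_neg, neg_div, neg_neg]
        field_simp
  have hlog : 0 ≤ Real.log (b / a) := Real.log_nonneg ((one_le_div hapos).2 hab)
  have total : ∫⁻ x, ENNReal.ofReal (u x) ∂μ ≤
      ENNReal.ofReal (W + W * Real.log (b / a) + W / (p - 1)) := by
    rw [layer, hsplit]
    calc _ ≤ ENNReal.ofReal W + ENNReal.ofReal (W * Real.log (b / a))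
          + ENNReal.ofReal (W / (p - 1)) := add_le_add (add_le_add bound1 bound2) bound3
    _ = _ := by
        rw [← ENNReal.ofReal_add hWpos.le (mul_nonneg hWpos.le hlog),
          ← ENNReal.ofReal_add (by positivity) (by positivity)]
  have hInt : ∫ x in Ω, u x ≤ W + W * Real.log (b / a) + W / (p - 1) := by
    rw [show (∫ x in Ω, u x) = ∫ x, u x ∂μ from rfl,
      integral_eq_lintegral_of_nonneg_ae hu_nn hu.aestronglyMeasurable]
    calc (∫⁻ x, ENNReal.ofReal (u x) ∂μ).toReal
        ≤ (ENNReal.ofReal (W + W * Real.log (b / a) + W / (p - 1))).toReal :=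
          ENNReal.toReal_mono ENNReal.ofReal_ne_top total
    _ = _ := ENNReal.toReal_ofReal (by positivity)
  refine hInt.trans (le_of_eq ?_)
  have hlogb : Real.log b = (1 / (p - 1)) * (Real.log I - Real.log W) := by
    rw [hbdef, Real.log_rpow (by positivity), Real.log_div hIpos.ne' hWpos.ne']
  have hloga : Real.log a = Real.log W - Real.log Vr := by
    rw [hadef, Real.log_div hWpos.ne' hVr.ne']
  have hlogarg : Real.log (I ^ (1 / p) / W * Vr ^ (1 - 1 / p))
      = (1 / p) * Real.log I - Real.log W + (1 - 1 / p) * Real.log Vr := by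
    rw [Real.log_mul (by positivity) (by positivity),
      Real.log_div (by positivity) hWpos.ne', Real.log_rpow hIpos, Real.log_rpow hVr]
  rw [Real.log_div hbpos.ne' hapos.ne', hlogb, hloga, hlogarg]
  field_simp
  ring
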